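/- Every family ζ : A × I → M admits the graded representation ζ = Σ_{k ∈ I} ε^k_{φ_k}: defining φ_k : A → M by φ_k(α) = Σ_{i + j = k} (−1)^{|j|} · C(k, i) • D_j(ζ(α, i)) (sum over pairs i, j ∈ I with i + j = k), one has, for all α ∈ A and i ∈ I, ζ(α, i) = Σ_{k ≤ i} C(i, k) • D_{i−k}(φ_k(α)) (a finite sum over multi-indices k ≤ i). -/

import Mathlib

/-- The covariant-derivative operator on families `ζ : A × I → M`, `I = (Fin m → ℕ)`:
`(∇_μ ζ)(α, i) = D_μ (ζ (α, i)) − ζ (α, i + e_μ)`. -/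
def nab {R : Type*} [CommRing R] {M : Type*} [AddCommGroup M] [Module R M]
    {m : ℕ} {A : Type*} (D : Fin m → Module.End R M) (μ : Fin m)
    (ζ : A × (Fin m → ℕ) → M) : A × (Fin m → ℕ) → M :=
  fun p => D μ (ζ p) - ζ (p.1, p.2 + Pi.single μ 1)

/-- Iterated composition `g_1^{j^1} ∘ … ∘ g_m^{j^m}` of a family of maps, used for
`D_j = D_1^{j^1} ∘ … ∘ D_m^{j^m}` and `∇_r = ∇_1^{r^1} ∘ … ∘ ∇_m^{r^m}`. -/
def multiIter {β : Type*} {m : ℕ} (g : Fin m → β → β) (j : Fin m → ℕ) : β → β :=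
  (List.ofFn fun μ => (g μ)^[j μ]).foldr (· ∘ ·) id

open Finset

section AuxGraded

variable {R : Type*} [CommRing R] {M : Type*} [AddCommGroup M] [Module R M] {m : ℕ}

/-- 1D alternating binomial inversion. -/
lemma graded_oneD (q n : ℕ) (h : q ≤ n) :
    ∑ k ∈ Finset.Icc q n, ((n.choose k : ℤ) * (-1) ^ (k - q) * (k.choose q)) =
      if n = q then 1 else 0 := by
  rw [← Finset.Ico_add_one_right_eq_Icc, Finset.sum_Ico_eq_sum_range]
  have h1 : n + 1 - q = (n - q) + 1 := by omega
  rw [h1]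
  have h2 : ∀ t ∈ Finset.range (n - q + 1),
      ((n.choose (q + t) : ℤ) * (-1) ^ (q + t - q) * ((q + t).choose q)) =
      (n.choose q : ℤ) * ((-1) ^ t * ((n - q).choose t : ℤ)) := by
    intro t ht
    have htn : q + t ≤ n := by
      have := Finset.mem_range.mp ht; omega
    have hmul := Nat.choose_mul (n := n) (Nat.le_add_right q t)
    have h3 : q + t - q = t := by omega
    rw [h3] at hmul ⊢
    have key : (n.choose (q + t) : ℤ) * ((q + t).choose q) =
        (n.choose q : ℤ) * ((n - q).choose t) := by exact_mod_cast congrArg Nat.cast hmul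
    linear_combination (-1 : ℤ) ^ t * key
  rw [Finset.sum_congr rfl h2, ← Finset.mul_sum, Int.alternating_sum_range_choose]
  by_cases hnq : n = q
  · subst hnq; simp
  · rw [if_neg (by omega), if_neg hnq, mul_zero]

private lemma listFoldr_comp (L : List (Module.End R M)) :
    (L.map (fun f : Module.End R M => ⇑f)).foldr (· ∘ ·) id = ⇑L.prod := by
  induction L with
  | nil => simp; rfl
  | cons a L ih => simp [ih]; rfl

/-- `D_a = D_1^{a^1} * … * D_m^{a^m}` as an endomorphism. -/
def Eend (D : Fin m → Module.End R M) (a : Fin m → ℕ) : Module.End R M :=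
  (List.ofFn fun μ => (D μ) ^ (a μ)).prod

lemma multiIter_eq (D : Fin m → Module.End R M) (a : Fin m → ℕ) :
    multiIter (fun μ => ⇑(D μ)) a = ⇑(Eend D a) := by
  unfold multiIter Eend
  rw [← listFoldr_comp, List.map_ofFn]
  congr 1
  exact congrArg List.ofFn (funext fun μ => (Module.End.coe_pow _ _).symm)

private lemma multiset_noncommProd_congr {α : Type*} [Monoid α] {s t : Multiset α}
    (h : s = t) (comm) : s.noncommProd comm = t.noncommProd (h ▸ comm) := by
  subst h; rfl

lemma Eend_eq_noncommProd (D : Fin m → Module.End R M) (a : Fin m → ℕ) (comm) :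
    Finset.univ.noncommProd (fun μ => D μ ^ a μ) comm = Eend D a := by
  show (Finset.univ.val.map fun μ => D μ ^ a μ).noncommProd _ = _
  rw [multiset_noncommProd_congr (Fin.univ_val_map _)]
  exact Multiset.noncommProd_coe _ _

lemma Eend_mul (D : Fin m → Module.End R M)
    (hD : ∀ μ ν : Fin m, ∀ x : M, D μ (D ν x) = D ν (D μ x)) (a b : Fin m → ℕ) :
    Eend D a * Eend D b = Eend D (a + b) := by
  have hcomm : ∀ μ ν : Fin m, Commute (D μ) (D ν) := fun μ ν => LinearMap.ext (hD μ ν)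
  have comm_a : ((Finset.univ : Finset (Fin m)) : Set (Fin m)).Pairwise
      (Function.onFun Commute fun μ => D μ ^ a μ) := fun μ _ ν _ _ => (hcomm μ ν).pow_pow _ _
  have comm_b : ((Finset.univ : Finset (Fin m)) : Set (Fin m)).Pairwise
      (Function.onFun Commute fun μ => D μ ^ b μ) := fun μ _ ν _ _ => (hcomm μ ν).pow_pow _ _
  have comm_ba : ((Finset.univ : Finset (Fin m)) : Set (Fin m)).Pairwise
      (fun μ ν => Commute (D μ ^ b μ) (D ν ^ a ν)) :=
    fun μ _ ν _ _ => (hcomm μ ν).pow_pow _ _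
  rw [← Eend_eq_noncommProd D a comm_a, ← Eend_eq_noncommProd D b comm_b,
    ← Finset.noncommProd_mul_distrib _ _ comm_a comm_b comm_ba]
  rw [Finset.noncommProd_congr rfl
    (g := fun μ => D μ ^ (a + b) μ)
    (fun μ _ => by simp [Pi.mul_apply, pow_add])
    (Finset.noncommProd_mul_distrib_aux comm_a comm_b comm_ba)]
  exact Eend_eq_noncommProd D (a + b) _

lemma Eend_zero (D : Fin m → Module.End R M) : Eend D 0 = 1 := by
  unfold Eend
  simp

end AuxGraded

/-- Every family `ζ : A × I → M` admits the graded representation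
`ζ = Σ_{k ∈ I} ε^k_{φ_k}` with `φ_k α = Σ_{i + j = k} (−1)^{|j|} C(k,i) • D_j (ζ (α, i))`:
for all `α` and `i`, `ζ (α, i) = Σ_{k ≤ i} C(i,k) • D_{i−k} (φ_k α)` (sums over pairs
`i + j = k` are written as sums over `i ≤ k` with `j = k − i`). -/
theorem graded_representation {R : Type*} [CommRing R] {M : Type*} [AddCommGroup M]
    [Module R M] {m : ℕ} {A : Type*} (D : Fin m → Module.End R M)
    (hD : ∀ μ ν : Fin m, ∀ x : M, D μ (D ν x) = D ν (D μ x))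
    (ζ : A × (Fin m → ℕ) → M) :
    ∀ (α : A) (i : Fin m → ℕ),
      ζ (α, i) =
        ∑ k ∈ Finset.Iic i, (∏ μ, Nat.choose (i μ) (k μ)) •
          multiIter (fun μ => ⇑(D μ)) (i - k)
            (∑ q ∈ Finset.Iic k, ((-1 : ℤ) ^ (∑ μ, (k - q) μ)) •
              ((∏ μ, Nat.choose (k μ) (q μ)) •
                multiIter (fun μ => ⇑(D μ)) (k - q) (ζ (α, q)))) := by
  intro α i
  simp only [multiIter_eq]
  have step1 : ∀ k ∈ Finset.Iic i,
      (∏ μ, Nat.choose (i μ) (k μ)) •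
        Eend D (i - k) (∑ q ∈ Finset.Iic k, ((-1 : ℤ) ^ (∑ μ, (k - q) μ)) •
          ((∏ μ, Nat.choose (k μ) (q μ)) • Eend D (k - q) (ζ (α, q)))) =
      ∑ q ∈ Finset.Iic k,
        (((∏ μ, ((i μ).choose (k μ) : ℤ)) * (-1) ^ (∑ μ, (k - q) μ) *
          (∏ μ, ((k μ).choose (q μ) : ℤ))) • Eend D (i - q) (ζ (α, q))) := by
    intro k hk
    rw [map_sum, Finset.smul_sum]
    refine Finset.sum_congr rfl fun q hq => ?_
    have hk' : k ≤ i := Finset.mem_Iic.mp hk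
    have hq' : q ≤ k := Finset.mem_Iic.mp hq
    have hE : Eend D (i - k) (Eend D (k - q) (ζ (α, q))) = Eend D (i - q) (ζ (α, q)) := by
      rw [← Module.End.mul_apply, Eend_mul D hD]
      congr 2
      funext μ
      exact tsub_add_tsub_cancel (hk' μ) (hq' μ)
    rw [map_zsmul, map_nsmul, hE]
    simp only [← natCast_zsmul, smul_smul]
    congr 1
    push_cast
    ring
  rw [Finset.sum_congr rfl step1]
  rw [Finset.sum_comm' (s' := fun q => Finset.Icc q i) (t' := Finset.Iic i) (fun k q => by
    simp only [Finset.mem_Iic, Finset.mem_Icc]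
    exact ⟨fun ⟨h1, h2⟩ => ⟨⟨h2, h1⟩, h2.trans h1⟩, fun ⟨⟨h2, h1⟩, _⟩ => ⟨h1, h2⟩⟩)]
  have step3 : ∀ q ∈ Finset.Iic i,
      (∑ k ∈ Finset.Icc q i,
        (((∏ μ, ((i μ).choose (k μ) : ℤ)) * (-1) ^ (∑ μ, (k - q) μ) *
          (∏ μ, ((k μ).choose (q μ) : ℤ))) • Eend D (i - q) (ζ (α, q)))) =
      (if q = i then (1 : ℤ) else 0) • Eend D (i - q) (ζ (α, q)) := by
    intro q hq
    have hq' : q ≤ i := Finset.mem_Iic.mp hq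
    rw [← Finset.sum_smul]
    congr 1
    calc ∑ k ∈ Finset.Icc q i,
          ((∏ μ, ((i μ).choose (k μ) : ℤ)) * (-1) ^ (∑ μ, (k - q) μ) *
            (∏ μ, ((k μ).choose (q μ) : ℤ)))
        = ∑ k ∈ Finset.Icc q i,
            ∏ μ, (((i μ).choose (k μ) : ℤ) * (-1) ^ (k μ - q μ) * ((k μ).choose (q μ))) := by
          refine Finset.sum_congr rfl fun k _ => ?_
          rw [← Finset.prod_pow_eq_pow_sum, ← Finset.prod_mul_distrib,
            ← Finset.prod_mul_distrib]
          rfl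
      _ = ∏ μ, ∑ j ∈ Finset.Icc (q μ) (i μ),
            (((i μ).choose j : ℤ) * (-1) ^ (j - q μ) * (j.choose (q μ))) := by
          rw [Finset.prod_univ_sum, Pi.Icc_eq]
      _ = ∏ μ, (if i μ = q μ then (1 : ℤ) else 0) :=
          Finset.prod_congr rfl fun μ _ => graded_oneD _ _ (hq' μ)
      _ = if q = i then 1 else 0 := by
          rw [Finset.prod_boole]
          by_cases h : q = i
          · subst h; simp
          · rw [if_neg h, if_neg fun hall => h (funext fun μ => (hall μ (Finset.mem_univ μ)).symm)]
  rw [Finset.sum_congr rfl step3]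
  simp only [ite_smul, one_smul, zero_smul]
  rw [Finset.sum_ite_eq' (Finset.Iic i) i (fun q => Eend D (i - q) (ζ (α, q))),
    if_pos (Finset.mem_Iic.mpr le_rfl)]
  simp [Eend_zero]
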